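/- For the adaptive cruise control system, min_{u∈[u̲,ū]} max_{(d₁,d₂)∈[d̲₁,d̄₁]×[d̲₂,d̄₂]} L_f g₁(z,u,(d₁,d₂)) = −τa₂z₂² + (1 − τa₁)z₂ − z₁ − τa₀ + τg·u̲ + τg·d̄₂. Consequently, provided (1 − τa₁)² − 4τa₂(z₁ + τ(a₀ − g·u̲ − g·d̄₂)) ≥ 0, the points z = (z₁,z₂,z₃) with g₁(z) = 0 satisfying the ultimate tangentiality condition (this min-max equal to 0) are exactly those with z₂ = (1 − τa₁)/(2τa₂) ± √( ((1 − τa₁)/(2τa₂))² − (z₁ + τ(a₀ − g·u̲ − g·d̄₂))/(τa₂) ) and z₃ = τz₂; moreover, if z₁ + τ(a₀ − g·u̲ − g·d̄₂) ≤ 0 then the two roots z₂⁺ and z₂⁻ have opposite signs. -/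

import Mathlib

open Set

/-- The right-hand side of the adaptive cruise control system:
ẋ₁ = a + d₁, ẋ₂ = −(a₀ + a₁x₂ + a₂x₂²) + g·d₂ + g·u, ẋ₃ = x₁ − x₂, with g = 9.81. -/
noncomputable def accField (a a0 a1 a2 : ℝ) (x : Fin 3 → ℝ) (u : ℝ) (d : ℝ × ℝ) :
    Fin 3 → ℝ :=
  ![a + d.1, -(a0 + a1 * x 1 + a2 * (x 1) ^ 2) + 9.81 * d.2 + 9.81 * u, x 0 - x 1]

/-- The Lie derivative L_f h(x,u,d) = Dh(x)·f(x,u,d) for the ACC vector field. -/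
noncomputable def accLie (a a0 a1 a2 : ℝ) (h : (Fin 3 → ℝ) → ℝ)
    (x : Fin 3 → ℝ) (u : ℝ) (d : ℝ × ℝ) : ℝ :=
  fderiv ℝ h x (accField a a0 a1 a2 x u d)

lemma accLie_g1 (a a0 a1 a2 τc : ℝ) (z : Fin 3 → ℝ) (u : ℝ) (d : ℝ × ℝ) :
    accLie a a0 a1 a2 (fun x => τc * x 1 - x 2) z u d =
      τc * (-(a0 + a1 * z 1 + a2 * (z 1) ^ 2) + 9.81 * d.2 + 9.81 * u) - (z 0 - z 1) := by
  have hfun : (fun x : Fin 3 → ℝ => τc * x 1 - x 2) =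
      fun x => (τc • (ContinuousLinearMap.proj 1 : (Fin 3 → ℝ) →L[ℝ] ℝ)
        - (ContinuousLinearMap.proj 2 : (Fin 3 → ℝ) →L[ℝ] ℝ)) x := by
    ext x; simp
  unfold accLie
  rw [hfun, ContinuousLinearMap.fderiv]
  simp [accField]

lemma mySup {ι : Sort*} [Nonempty ι] (f : ι → ℝ) (i0 : ι) (h : ∀ i, f i ≤ f i0) :
    ⨆ i, f i = f i0 :=
  le_antisymm (ciSup_le h) (le_ciSup ⟨f i0, by rintro _ ⟨i, rfl⟩; exact h i⟩ i0)

lemma myInf {ι : Sort*} [Nonempty ι] (f : ι → ℝ) (i0 : ι) (h : ∀ i, f i0 ≤ f i) :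
    ⨅ i, f i = f i0 :=
  le_antisymm (ciInf_le ⟨f i0, by rintro _ ⟨i, rfl⟩; exact h i⟩ i0) (le_ciInf h)

/-- For the ACC system, the min-max of L_f g₁ equals
−τa₂z₂² + (1 − τa₁)z₂ − z₁ − τa₀ + τg·u̲ + τg·d̄₂; if the discriminant is nonnegative,
the ultimate tangentiality points on g₁ = 0 are exactly those given by the two roots,
with z₃ = τz₂; and if z₁ + τ(a₀ − g·u̲ − g·d̄₂) ≤ 0 the two roots have opposite signs. -/
theorem acc_ultimate_tangentiality_g1
    (a a0 a1 a2 τc Dmax ul uu dl1 du1 dl2 du2 : ℝ)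
    (ha0 : 0 < a0) (ha1 : 0 < a1) (ha2 : 0 < a2) (hτc : 0 < τc) (hDmax : 0 < Dmax)
    (hu : ul ≤ uu) (hd1 : dl1 ≤ du1) (hd2 : dl2 ≤ du2)
    (z : Fin 3 → ℝ) :
    -- value of the min-max of the Lie derivative of g₁
    (⨅ u : Set.Icc ul uu, ⨆ d : (Set.Icc dl1 du1) ×ˢ (Set.Icc dl2 du2),
        accLie a a0 a1 a2 (fun x => τc * x 1 - x 2) z ↑u ↑d) =
      -(τc * a2) * (z 1) ^ 2 + (1 - τc * a1) * z 1 - z 0 - τc * a0 +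
        τc * 9.81 * ul + τc * 9.81 * du2 ∧
    -- characterization of the ultimate tangentiality points on g₁ = 0
    ((1 - τc * a1) ^ 2 - 4 * τc * a2 * (z 0 + τc * (a0 - 9.81 * ul - 9.81 * du2)) ≥ 0 →
      ((τc * z 1 - z 2 = 0 ∧
          (⨅ u : Set.Icc ul uu, ⨆ d : (Set.Icc dl1 du1) ×ˢ (Set.Icc dl2 du2),
            accLie a a0 a1 a2 (fun x => τc * x 1 - x 2) z ↑u ↑d) = 0) ↔
        ((z 1 = (1 - τc * a1) / (2 * τc * a2) +
            Real.sqrt (((1 - τc * a1) / (2 * τc * a2)) ^ 2 -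
              (z 0 + τc * (a0 - 9.81 * ul - 9.81 * du2)) / (τc * a2)) ∨
          z 1 = (1 - τc * a1) / (2 * τc * a2) -
            Real.sqrt (((1 - τc * a1) / (2 * τc * a2)) ^ 2 -
              (z 0 + τc * (a0 - 9.81 * ul - 9.81 * du2)) / (τc * a2))) ∧
         z 2 = τc * z 1))) ∧
    -- opposite signs of the two roots
    (z 0 + τc * (a0 - 9.81 * ul - 9.81 * du2) ≤ 0 →
      (1 - τc * a1) / (2 * τc * a2) -
          Real.sqrt (((1 - τc * a1) / (2 * τc * a2)) ^ 2 -
            (z 0 + τc * (a0 - 9.81 * ul - 9.81 * du2)) / (τc * a2)) ≤ 0 ∧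
        0 ≤ (1 - τc * a1) / (2 * τc * a2) +
          Real.sqrt (((1 - τc * a1) / (2 * τc * a2)) ^ 2 -
            (z 0 + τc * (a0 - 9.81 * ul - 9.81 * du2)) / (τc * a2))) := by
  have hA : (0:ℝ) < τc * a2 := mul_pos hτc ha2
  set p : ℝ := (1 - τc * a1) / (2 * τc * a2) with hp
  set K : ℝ := z 0 + τc * (a0 - 9.81 * ul - 9.81 * du2) with hK
  set s : ℝ := Real.sqrt (p ^ 2 - K / (τc * a2)) with hs
  -- Step 1: the min-max value
  haveI : Nonempty ↥(Set.Icc ul uu) := ⟨⟨ul, le_refl _, hu⟩⟩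
  haveI : Nonempty ↥((Set.Icc dl1 du1) ×ˢ (Set.Icc dl2 du2)) :=
    ⟨⟨(du1, du2), by constructor <;> constructor <;> simp [hd1, hd2]⟩⟩
  have hsup : ∀ u : ℝ,
      (⨆ d : (Set.Icc dl1 du1) ×ˢ (Set.Icc dl2 du2),
        accLie a a0 a1 a2 (fun x => τc * x 1 - x 2) z u ↑d) =
      τc * (-(a0 + a1 * z 1 + a2 * (z 1) ^ 2) + 9.81 * du2 + 9.81 * u) - (z 0 - z 1) := by
    intro u
    have := mySup (fun d : ((Set.Icc dl1 du1) ×ˢ (Set.Icc dl2 du2)) =>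
        accLie a a0 a1 a2 (fun x => τc * x 1 - x 2) z u ↑d)
      ⟨(du1, du2), by constructor <;> constructor <;> simp [hd1, hd2]⟩
      (by
        rintro ⟨d, hd⟩
        rw [mem_prod] at hd
        simp only [accLie_g1]
        have h2 : d.2 ≤ du2 := hd.2.2
        nlinarith [hτc.le])
    rw [this]; simp only [accLie_g1]
  have hval : (⨅ u : Set.Icc ul uu, ⨆ d : (Set.Icc dl1 du1) ×ˢ (Set.Icc dl2 du2),
      accLie a a0 a1 a2 (fun x => τc * x 1 - x 2) z ↑u ↑d) =
      -(τc * a2) * (z 1) ^ 2 + (1 - τc * a1) * z 1 - z 0 - τc * a0 +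
        τc * 9.81 * ul + τc * 9.81 * du2 := by
    have := myInf (fun u : (Set.Icc ul uu) =>
        ⨆ d : (Set.Icc dl1 du1) ×ˢ (Set.Icc dl2 du2),
          accLie a a0 a1 a2 (fun x => τc * x 1 - x 2) z ↑u ↑d)
      ⟨ul, le_refl _, hu⟩
      (by
        rintro ⟨u, hul, huu⟩
        simp only [hsup]
        nlinarith [hτc.le])
    rw [this]; simp only [hsup]
    ring
  refine ⟨hval, ?_, ?_⟩
  · -- characterization
    intro hdisc
    have hdisc' : 0 ≤ p ^ 2 - K / (τc * a2) := by
      have he : p ^ 2 - K / (τc * a2) =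
          ((1 - τc * a1) ^ 2 - 4 * τc * a2 * K) / (4 * (τc * a2) ^ 2) := by
        rw [hp]; field_simp; ring
      rw [he]
      apply div_nonneg _ (by positivity)
      linarith [hdisc]
    have hs2 : s ^ 2 = p ^ 2 - K / (τc * a2) := Real.sq_sqrt hdisc'
    have hfactor : -(τc * a2) * (z 1) ^ 2 + (1 - τc * a1) * z 1 - z 0 - τc * a0 +
        τc * 9.81 * ul + τc * 9.81 * du2 =
        -(τc * a2) * ((z 1 - (p + s)) * (z 1 - (p - s))) := by
      have h2p : 2 * (τc * a2) * p = 1 - τc * a1 := by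
        rw [hp]; field_simp
      have hps : (τc * a2) * (p ^ 2 - s ^ 2) = z 0 + τc * (a0 - 9.81 * ul - 9.81 * du2) := by
        rw [hs2]
        field_simp
        rw [hK]; ring
      linear_combination (-(z 1)) * h2p + hps
    constructor
    · rintro ⟨htang, hmin⟩
      rw [hval, hfactor] at hmin
      have := mul_eq_zero.mp hmin
      rcases this with h | h
      · exfalso; linarith
      · rcases mul_eq_zero.mp h with h | h
        · exact ⟨Or.inl (by linarith [sub_eq_zero.mp h]), by linarith⟩
        · exact ⟨Or.inr (by linarith [sub_eq_zero.mp h]), by linarith⟩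
    · rintro ⟨hroot, hz3⟩
      refine ⟨by linarith, ?_⟩
      rw [hval, hfactor]
      rcases hroot with h | h <;> rw [h] <;> ring
  · -- opposite signs
    intro hKle
    have hKA : K / (τc * a2) ≤ 0 := div_nonpos_of_nonpos_of_nonneg hKle hA.le
    have hdisc' : 0 ≤ p ^ 2 - K / (τc * a2) := by nlinarith [sq_nonneg p]
    have hs2 : s ^ 2 = p ^ 2 - K / (τc * a2) := Real.sq_sqrt hdisc'
    have hsnn : 0 ≤ s := Real.sqrt_nonneg _
    have habs : |p| ≤ s := by
      rw [← Real.sqrt_sq_eq_abs]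
      exact Real.sqrt_le_sqrt (by linarith)
    constructor
    · linarith [neg_abs_le p, le_abs_self p]
    · linarith [neg_abs_le p]
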